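/- Let B be a noetherian ring and π ∈ B. Then the natural ring homomorphism B → (B ⊗ B[1/π]) × lim_n B/π^{n+1}B, given by localization and reduction, is faithfully flat. In particular, for any scheme (or sheaf for the fppf topology) X, the induced map X(B) → X(B[1/π]) × lim_n X(B/π^{n+1}B) is injective for X separated affine. -/

import Mathlib

/-- A product of two flat modules is flat. -/
theorem flat_prod_aux {R M N : Type*} [CommRing R] [AddCommGroup M] [AddCommGroup N]
    [Module R M] [Module R N] [Module.Flat R M] [Module.Flat R N] :
    Module.Flat R (M × N) := by
  rw [Module.Flat.iff_rTensor_injective']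
  intro I
  have key : ∀ x : TensorProduct R ↥I (M × N),
      TensorProduct.prodRight R R R M N (LinearMap.rTensor (M × N) I.subtype x)
        = (LinearMap.rTensor M I.subtype ((TensorProduct.prodRight R R I M N x).1),
           LinearMap.rTensor N I.subtype ((TensorProduct.prodRight R R I M N x).2)) := by
    intro x
    induction x using TensorProduct.induction_on with
    | zero => simp [Prod.ext_iff]
    | tmul a p => obtain ⟨p1, p2⟩ := p; simp
    | add x y hx hy => simp [hx, hy, Prod.ext_iff]
  intro x y h
  apply (TensorProduct.prodRight R R I M N).injective
  have h1 := key x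
  have h2 := key y
  rw [h] at h1
  rw [h1] at h2
  have e1 : LinearMap.rTensor M I.subtype ((TensorProduct.prodRight R R I M N x).1)
      = LinearMap.rTensor M I.subtype ((TensorProduct.prodRight R R I M N y).1) :=
    (Prod.ext_iff.mp h2).1
  have e2 : LinearMap.rTensor N I.subtype ((TensorProduct.prodRight R R I M N x).2)
      = LinearMap.rTensor N I.subtype ((TensorProduct.prodRight R R I M N y).2) :=
    (Prod.ext_iff.mp h2).2
  have i1 := (Module.Flat.iff_rTensor_injective' (R := R) (M := M)).mp inferInstance I e1
  have i2 := (Module.Flat.iff_rTensor_injective' (R := R) (M := N)).mp inferInstance I e2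
  exact Prod.ext i1 i2

/-- If a proper ideal of an `R`-algebra contains the image of `m`, then `m • ⊤ ≠ ⊤`. -/
theorem smul_top_ne_top_aux {R A : Type*} [CommRing R] [CommRing A] [Algebra R A]
    {m : Ideal R} {q : Ideal A} (hq : q ≠ ⊤) (h : ∀ a ∈ m, algebraMap R A a ∈ q) :
    m • (⊤ : Submodule R A) ≠ ⊤ := by
  intro htop
  apply hq
  rw [Ideal.eq_top_iff_one]
  have h1 : (1 : A) ∈ m • (⊤ : Submodule R A) := by rw [htop]; trivial
  refine Submodule.smul_induction_on h1 ?_ ?_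
  · intro r hr n _
    rw [Algebra.smul_def]
    exact q.mul_mem_right _ (h r hr)
  · intro x y hx hy
    exact q.add_mem hx hy

/-- Let `B` be a noetherian ring and `π ∈ B`.  Then the natural ring
homomorphism `B → B[1/π] × lim_n B/π^{n+1}B` (localization in the first factor, reduction
to the `π`-adic completion in the second) is faithfully flat.  In particular, for any
affine scheme `X = Spec T`, the induced map
`X(B) → X(B[1/π]) × X(lim_n B/π^{n+1}B)` on points is injective. -/
theorem localization_prod_completion_faithfullyFlat
    {B : Type*} [CommRing B] [IsNoetherianRing B] (π : B) :
    Module.FaithfullyFlat B ((Localization.Away π) × AdicCompletion (Ideal.span {π}) B) ∧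
    ∀ (T : Type*) [CommRing T],
      Function.Injective (fun f : T →+* B =>
        ((algebraMap B (Localization.Away π)).comp f,
         (algebraMap B (AdicCompletion (Ideal.span {π}) B)).comp f)) := by
  set I : Ideal B := Ideal.span {π} with hI
  set L := Localization.Away π
  set C := AdicCompletion I B
  have hflatC : Module.Flat B C := AdicCompletion.flat_of_isNoetherian (I := I)
  have hflat : Module.Flat B (L × C) := flat_prod_aux
  have hff : Module.FaithfullyFlat B (L × C) := by
    refine ⟨fun m hm htop => ?_⟩
    -- project to each factor
    by_cases hπ : π ∈ m
    · -- use the completion factor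
      have hproj : m • (⊤ : Submodule B C) = ⊤ := by
        have := congrArg (Submodule.map (LinearMap.snd B L C)) htop
        rwa [Submodule.map_smul'', Submodule.map_top, LinearMap.range_eq_top.mpr
          (fun c => ⟨(0, c), rfl⟩)] at this
      -- the image of m in B ⧸ I ^ 1 is proper
      have hI1le : I ^ 1 ≤ m := by
        rw [pow_one, hI, Ideal.span_le, Set.singleton_subset_iff]; exact hπ
      have hmapne : Ideal.map (Ideal.Quotient.mk (I ^ 1)) m ≠ ⊤ := by
        intro h
        have := congrArg (Ideal.comap (Ideal.Quotient.mk (I ^ 1))) h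
        rw [Ideal.comap_map_of_surjective _ Ideal.Quotient.mk_surjective, Ideal.comap_top] at this
        have hle : m ⊔ Ideal.comap (Ideal.Quotient.mk (I ^ 1)) ⊥ ≤ m := by
          refine sup_le le_rfl ?_
          intro x hx
          rw [Ideal.mem_comap, Submodule.mem_bot, Ideal.Quotient.eq_zero_iff_mem] at hx
          exact hI1le hx
        exact hm.ne_top (top_le_iff.mp (this ▸ hle))
      set q : Ideal C := Ideal.comap (AdicCompletion.evalₐ I 1)
        (Ideal.map (Ideal.Quotient.mk (I ^ 1)) m) with hq
      have hqne : q ≠ ⊤ := fun h => hmapne (by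
        rw [Ideal.eq_top_iff_one]
        have : (1 : C) ∈ q := by rw [h]; trivial
        simpa [hq] using this)
      refine smul_top_ne_top_aux hqne (fun a ha => ?_) hproj
      rw [hq, Ideal.mem_comap, AlgHom.commutes]
      exact Ideal.mem_map_of_mem _ ha
    · -- use the localization factor
      have hproj : m • (⊤ : Submodule B L) = ⊤ := by
        have := congrArg (Submodule.map (LinearMap.fst B L C)) htop
        rwa [Submodule.map_smul'', Submodule.map_top, LinearMap.range_eq_top.mpr
          (fun l => ⟨(l, 0), rfl⟩)] at this
      have hdisj : Disjoint ((Submonoid.powers π : Submonoid B) : Set B) (m : Set B) := by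
        rw [Set.disjoint_left]
        rintro x ⟨n, rfl⟩ hx
        exact hπ (hm.isPrime.mem_of_pow_mem n hx)
      have hqprime : (Ideal.map (algebraMap B L) m).IsPrime :=
        IsLocalization.isPrime_of_isPrime_disjoint (Submonoid.powers π) L m hm.isPrime hdisj
      refine smul_top_ne_top_aux hqprime.ne_top (fun a ha => ?_) hproj
      exact Ideal.mem_map_of_mem _ ha
  refine ⟨hff, ?_⟩
  intro T _ f g h
  rw [Prod.ext_iff] at h
  ext t
  -- the element b = f t - g t maps to 0 in both factors
  set b : B := f t - g t with hb
  have hL : algebraMap B L b = 0 := by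
    have := congrArg (fun φ : T →+* L => φ t) h.1
    simp only [RingHom.comp_apply] at this
    rw [hb, map_sub, this, sub_self]
  have hC : algebraMap B C b = 0 := by
    have := congrArg (fun φ : T →+* C => φ t) h.2
    simp only [RingHom.comp_apply] at this
    rw [hb, map_sub, this, sub_self]
  have hsmul : ∀ p : L × C, b • p = 0 := by
    intro p
    have : b • p = (algebraMap B L b * p.1, algebraMap B C b * p.2) := by
      ext <;> simp [Algebra.smul_def]
    rw [this, hL, hC, zero_mul, zero_mul]
    rfl
  have hzero : (LinearMap.toSpanSingleton B B b) = 0 := by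
    rw [Module.FaithfullyFlat.zero_iff_lTensor_zero B (L × C)]
    apply TensorProduct.ext'
    intro p r
    simp only [LinearMap.lTensor_tmul, LinearMap.toSpanSingleton_apply, LinearMap.zero_apply]
    rw [show r • b = r • b • (1 : B) by simp, TensorProduct.tmul_smul, TensorProduct.tmul_smul,
      TensorProduct.smul_tmul', hsmul, TensorProduct.zero_tmul, smul_zero]
  have : b = 0 := by
    have := congrArg (fun φ : B →ₗ[B] B => φ 1) hzero
    simpa using this
  exact sub_eq_zero.mp this
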